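/- (Proposition 1) Let d ≥ 2, let {e_n}_{n=1}^{N} be a family of N mutually unbiased orthonormal bases of ℂ^d with projections Π_{nk}, and let ρ = Σ_{n=1}^{N} Σ_{k=1}^{d} λ_{nk} Π_{nk} be a matrix with real coefficients λ_{nk} satisfying tr(ρ) = 1 (equivalently Σ_{n,k} λ_{nk} = 1). Then the probabilities p_{nk} = tr(Π_{nk} ρ) satisfy Σ_{n=1}^{N} Σ_{k=1}^{d} p_{nk}² = tr(ρ²) + (N−1)/d. -/

import Mathlib

open scoped BigOperators

/-- Rank-one orthogonal projection `|v⟩⟨v|` onto a vector `v ∈ ℂ^d`, as a matrix. -/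
noncomputable def proj {d : ℕ} (v : EuclideanSpace ℂ (Fin d)) : Matrix (Fin d) (Fin d) ℂ :=
  Matrix.of fun i j => v i * star (v j)

/-- A family of orthonormal bases of `ℂ^d` is mutually unbiased if
`|⟨e n k, e m l⟩|² = 1/d` for all `n ≠ m` and all `k, l`. -/
def MutuallyUnbiased {d N : ℕ} (e : Fin N → Fin d → EuclideanSpace ℂ (Fin d)) : Prop :=
  ∀ n m : Fin N, n ≠ m → ∀ k l : Fin d,
    ‖(inner ℂ (e n k) (e m l) : ℂ)‖ ^ 2 = 1 / d

/-- Proposition 1: for `ρ = ∑ λ_{nk} Π_{nk}` with `tr ρ = 1` (i.e. `∑ λ_{nk} = 1`),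
the sum of the purities of the `N` observables equals `tr(ρ²) + (N-1)/d`. -/
lemma trace_proj_mul {d : ℕ} (v w : EuclideanSpace ℂ (Fin d)) :
    ((proj v * proj w).trace).re = ‖(inner ℂ v w : ℂ)‖ ^ 2 := by
  have h : ((proj v * proj w).trace) = (starRingEnd ℂ) (inner ℂ v w : ℂ) * (inner ℂ v w : ℂ) := by
    simp only [Matrix.trace, Matrix.diag, Matrix.mul_apply, proj, Matrix.of_apply,
      PiLp.inner_apply, RCLike.inner_apply, RCLike.star_def, map_sum, map_mul, RingHom.id_apply,
      Complex.conj_conj, Finset.sum_mul_sum]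
    apply Finset.sum_congr rfl; intro i _
    apply Finset.sum_congr rfl; intro j _
    ring
  rw [h, mul_comm, Complex.mul_conj]
  simp [Complex.normSq_eq_norm_sq, ← Complex.ofReal_pow]

theorem stmt_5 (d N : ℕ) (hd : 2 ≤ d)
    (e : Fin N → Fin d → EuclideanSpace ℂ (Fin d))
    (horth : ∀ n, Orthonormal ℂ (e n))
    (hmub : MutuallyUnbiased e)
    (lam : Fin N → Fin d → ℝ)
    (hlam : ∑ n : Fin N, ∑ k : Fin d, lam n k = 1)
    (ρ : Matrix (Fin d) (Fin d) ℂ)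
    (hρ : ρ = ∑ n : Fin N, ∑ k : Fin d, (lam n k : ℂ) • proj (e n k))
    (p : Fin N → Fin d → ℝ)
    (hp : ∀ n k, p n k = ((proj (e n k) * ρ).trace).re) :
    ∑ n : Fin N, ∑ k : Fin d, (p n k) ^ 2 = ((ρ * ρ).trace).re + ((N : ℝ) - 1) / d := by
  have hd0 : (d : ℝ) ≠ 0 := Nat.cast_ne_zero.mpr (by omega)
  set S : Fin N → ℝ := fun n => ∑ k, lam n k with hS
  -- trace of product of projections
  have hT : ∀ n m : Fin N, ∀ k l : Fin d, ((proj (e n k) * proj (e m l)).trace).re =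
      if n = m then (if k = l then (1:ℝ) else 0) else 1 / d := by
    intro n m k l
    rw [trace_proj_mul]
    by_cases hnm : n = m
    · subst hnm
      have := (orthonormal_iff_ite.mp (horth n)) k l
      rw [this]
      by_cases hkl : k = l <;> simp [hkl]
    · rw [hmub n m hnm k l]; simp [hnm]
  -- formula for p
  have hp' : ∀ n k, p n k = lam n k + (1 - S n) / d := by
    intro n k
    rw [hp, hρ]
    simp only [Matrix.mul_sum, Matrix.mul_smul, Matrix.trace_sum, Matrix.trace_smul,
      Complex.re_sum]
    have : ∀ m : Fin N, ∀ l : Fin d,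
        (((lam m l : ℂ) • (proj (e n k) * proj (e m l)).trace)).re
        = lam m l * (if n = m then (if k = l then (1:ℝ) else 0) else 1 / d) := by
      intro m l
      rw [← hT n m k l, smul_eq_mul]; simp [Complex.mul_re]
    simp only [this]
    rw [← Finset.sum_erase_add _ _ (Finset.mem_univ n)]
    have h1 : ∀ m ∈ Finset.univ.erase n, ∑ l : Fin d,
        lam m l * (if n = m then (if k = l then (1:ℝ) else 0) else 1 / d) = S m / d := by
      intro m hm
      have : n ≠ m := (Finset.ne_of_mem_erase hm).symm
      simp [this, hS, Finset.sum_div, div_eq_mul_inv, Finset.sum_mul]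
    rw [Finset.sum_congr rfl h1]
    have h2 : ∑ l : Fin d, lam n l * (if n = n then (if k = l then (1:ℝ) else 0) else 1 / d)
        = lam n k := by simp [mul_ite]
    rw [h2]
    have h3 : ∑ m ∈ Finset.univ.erase n, S m / d = (1 - S n) / d := by
      rw [← Finset.sum_div, Finset.sum_erase_eq_sub (Finset.mem_univ n), hlam]
    rw [h3]; ring
  -- trace of ρ² in terms of p
  have htr : ((ρ * ρ).trace).re = ∑ n, ∑ k, lam n k * p n k := by
    have hρρ : ρ * ρ = ∑ n : Fin N, ∑ k : Fin d, (lam n k : ℂ) • (proj (e n k) * ρ) := by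
      nth_rewrite 1 [hρ]
      rw [Matrix.sum_mul]
      apply Finset.sum_congr rfl; intro n _
      rw [Matrix.sum_mul]
      apply Finset.sum_congr rfl; intro k _
      rw [Matrix.smul_mul]
    rw [hρρ]
    simp only [Matrix.trace_sum, Matrix.trace_smul, Complex.re_sum]
    apply Finset.sum_congr rfl; intro n _
    apply Finset.sum_congr rfl; intro k _
    rw [smul_eq_mul, hp n k]; simp [Complex.mul_re]
  rw [htr]
  simp only [hp']
  have key : ∀ (a c : ℝ), (a + c)^2 = a * (a + c) + (c * a + c^2) := by intros; ring
  simp only [key, Finset.sum_add_distrib]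
  congr 1
  have e1 : ∀ n : Fin N, ∑ k : Fin d, (1 - S n)/d * lam n k = (1 - S n)/d * S n := by
    intro n; rw [← Finset.mul_sum]
  have e2 : ∀ n : Fin N, ∑ _k : Fin d, ((1 - S n)/d)^2 = (d : ℝ) * ((1 - S n)/d)^2 := by
    intro n
    rw [Finset.sum_const, Finset.card_univ, Fintype.card_fin, nsmul_eq_mul]
  rw [Finset.sum_congr rfl (fun n _ => e1 n), Finset.sum_congr rfl (fun n _ => e2 n),
    ← Finset.sum_add_distrib]
  have e3 : ∀ n : Fin N, (1 - S n)/d * S n + (d:ℝ) * ((1 - S n)/d)^2 = (1 - S n)/d := by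
    intro n; field_simp; ring
  rw [Finset.sum_congr rfl (fun n _ => e3 n), ← Finset.sum_div, Finset.sum_sub_distrib,
    Finset.sum_const, Finset.card_univ, Fintype.card_fin, nsmul_eq_mul, mul_one, hlam]
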